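/- Let n be an odd positive integer and ζ_n a primitive n-th root of unity. For every integer i, the complex number ∑_{j=1}^{n} 2^{gcd(n,j)-1} ζ_n^{-ij} equals ∑_{d | n} 2^{d-1} c_{n/d}(i), where c_m(i) is the Ramanujan sum; moreover this number is an even integer plus (n-1)c_n(i), hence n·c_n(i) - ∑_{j=1}^n 2^{gcd(n,j)-1} ζ_n^{-ij} is divisible by 2n. -/

import Mathlib

/-- Ramanujan's sum `c_n(i) = ∑_{d ∣ gcd(n,i)} μ(n/d) · d`. -/
def ramanujanSum (n i : ℕ) : ℤ :=
  ∑ d ∈ (Nat.gcd n i).divisors, (ArithmeticFunction.moebius (n / d)) * d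

section AuxLemmas
open Finset ArithmeticFunction
open scoped ArithmeticFunction.Moebius ArithmeticFunction.zeta

lemma sum_moebius_divisors (K : ℕ) :
    ∑ e ∈ K.divisors, (μ e : ℤ) = if K = 1 then 1 else 0 := by
  have h : (μ * ζ : ArithmeticFunction ℤ) K = (1 : ArithmeticFunction ℤ) K := by
    rw [moebius_mul_coe_zeta]
  rwa [coe_mul_zeta_apply, one_apply] at h

lemma divisors_gcd_eq (m i : ℕ) (hm : m ≠ 0) :
    (Nat.gcd m i).divisors = m.divisors.filter (· ∣ i) := by
  ext d
  simp only [Nat.mem_divisors, Finset.mem_filter, Nat.dvd_gcd_iff]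
  constructor
  · rintro ⟨⟨h1, h2⟩, -⟩; exact ⟨⟨h1, hm⟩, h2⟩
  · rintro ⟨⟨h1, -⟩, h2⟩
    exact ⟨⟨h1, h2⟩, Nat.gcd_ne_zero_left hm⟩

lemma sum_pow_primroot (m : ℕ) (hm : 0 < m) (ξ : ℂ) (hξ : IsPrimitiveRoot ξ m) (i : ℕ) :
    ∑ j ∈ Finset.Icc 1 m, ξ ^ (i * j) = if m ∣ i then (m : ℂ) else 0 := by
  have key : ∀ j, ξ ^ (i * j) = (ξ ^ i) ^ j := fun j => by rw [← pow_mul]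
  simp only [key]
  have hIcc : Finset.Icc 1 m = Finset.Ico 1 (m + 1) := by
    rw [Finset.Ico_add_one_right_eq_Icc]
  rw [hIcc, Finset.sum_Ico_eq_sum_range]
  simp only [Nat.add_sub_cancel]
  by_cases h : m ∣ i
  · have h1 : ξ ^ i = 1 := (hξ.pow_eq_one_iff_dvd i).mpr h
    simp [h1, h]
  · have h1 : ξ ^ i ≠ 1 := fun hc => h ((hξ.pow_eq_one_iff_dvd i).mp hc)
    have h2 : (ξ ^ i) ^ m = 1 := by
      rw [← pow_mul, mul_comm, pow_mul, hξ.pow_eq_one, one_pow]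
    have h3 : ∑ k ∈ Finset.range m, (ξ ^ i) ^ (1 + k)
        = (ξ ^ i) * ∑ k ∈ Finset.range m, (ξ ^ i) ^ k := by
      rw [Finset.mul_sum]; exact Finset.sum_congr rfl fun k _ => by rw [pow_add, pow_one]
    rw [h3, geom_sum_eq h1, h2, if_neg h]
    simp

lemma swap_gcd {β : Type*} [AddCommMonoid β] (m : ℕ) (hm : m ≠ 0) (s : Finset ℕ)
    (F : ℕ → ℕ → β) :
    ∑ k ∈ s, ∑ e ∈ (Nat.gcd m k).divisors, F e k =
      ∑ e ∈ m.divisors, ∑ k ∈ s.filter (fun k => e ∣ k), F e k := by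
  refine Finset.sum_comm' (fun k e => ?_)
  rw [divisors_gcd_eq m k hm]
  simp only [Finset.mem_filter]
  tauto

lemma swap_divisors {β : Type*} [AddCommMonoid β] (M : ℕ) (hM : M ≠ 0) (F : ℕ → ℕ → β) :
    ∑ d ∈ M.divisors, ∑ e ∈ d.divisors, F e d =
      ∑ e ∈ M.divisors, ∑ d ∈ M.divisors.filter (fun d => e ∣ d), F e d := by
  refine Finset.sum_comm' (fun d e => ?_)
  simp only [Nat.mem_divisors, Finset.mem_filter]
  constructor
  · rintro ⟨⟨h1, -⟩, h2, -⟩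
    exact ⟨⟨⟨h1, hM⟩, h2⟩, h2.trans h1, hM⟩
  · rintro ⟨⟨⟨h1, -⟩, h2⟩, h3, -⟩
    have : d ≠ 0 := fun h => hM (by simpa [h] using h1)
    exact ⟨⟨h1, hM⟩, h2, this⟩

lemma sum_Icc_filter_dvd {β : Type*} [AddCommMonoid β] (m e : ℕ) (he : e ∣ m) (hm : m ≠ 0)
    (G : ℕ → β) :
    ∑ k ∈ (Finset.Icc 1 m).filter (fun k => e ∣ k), G k
      = ∑ l ∈ Finset.Icc 1 (m / e), G (e * l) := by
  have he0 : e ≠ 0 := fun h => hm (by simpa [h] using he)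
  refine Finset.sum_nbij' (fun k => k / e) (fun l => e * l) ?_ ?_ ?_ ?_ ?_
  · intro k hk
    simp only [Finset.mem_filter, Finset.mem_Icc] at hk ⊢
    obtain ⟨⟨h1, h2⟩, h3⟩ := hk
    exact ⟨Nat.one_le_div_iff (Nat.pos_of_ne_zero he0) |>.mpr (Nat.le_of_dvd (by omega) h3),
      Nat.div_le_div_right h2⟩
  · intro l hl
    simp only [Finset.mem_filter, Finset.mem_Icc] at hl ⊢
    obtain ⟨h1, h2⟩ := hl
    refine ⟨⟨Nat.mul_pos (Nat.pos_of_ne_zero he0) h1, ?_⟩, Dvd.intro l rfl⟩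
    calc e * l ≤ e * (m / e) := Nat.mul_le_mul_left e h2
    _ = m := Nat.mul_div_cancel' he
  · intro k hk
    simp only [Finset.mem_filter] at hk
    exact Nat.mul_div_cancel' hk.2
  · intro l _
    exact Nat.mul_div_cancel_left l (Nat.pos_of_ne_zero he0)
  · intro k hk
    simp only [Finset.mem_filter] at hk
    rw [Nat.mul_div_cancel' hk.2]

lemma sum_divisors_filter_dvd {β : Type*} [AddCommMonoid β] (M e : ℕ) (hM : M ≠ 0) (he : e ∣ M)
    (G : ℕ → β) :
    ∑ d ∈ M.divisors.filter (fun d => e ∣ d), G d = ∑ c ∈ (M / e).divisors, G (e * c) := by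
  have he0 : e ≠ 0 := fun h => hM (by simpa [h] using he)
  have hMe : M / e ≠ 0 := by
    have := Nat.div_pos (Nat.le_of_dvd (Nat.pos_of_ne_zero hM) he) (Nat.pos_of_ne_zero he0)
    omega
  refine Finset.sum_nbij' (fun d => d / e) (fun c => e * c) ?_ ?_ ?_ ?_ ?_
  · intro d hd
    simp only [Finset.mem_filter, Nat.mem_divisors] at hd ⊢
    obtain ⟨⟨h1, -⟩, c, rfl⟩ := hd
    refine ⟨?_, hMe⟩
    rw [Nat.mul_div_cancel_left c (Nat.pos_of_ne_zero he0)]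
    have : e * c ∣ e * (M / e) := by rwa [Nat.mul_div_cancel' he]
    exact (Nat.mul_dvd_mul_iff_left (Nat.pos_of_ne_zero he0)).mp this
  · intro c hc
    simp only [Finset.mem_filter, Nat.mem_divisors] at hc ⊢
    obtain ⟨h1, -⟩ := hc
    exact ⟨⟨(Nat.mul_dvd_mul_left e h1).trans (by rw [Nat.mul_div_cancel' he]), hM⟩,
      Dvd.intro c rfl⟩
  · intro d hd
    simp only [Finset.mem_filter] at hd
    exact Nat.mul_div_cancel' hd.2
  · intro c _
    exact Nat.mul_div_cancel_left c (Nat.pos_of_ne_zero he0)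
  · intro d hd
    simp only [Finset.mem_filter] at hd
    rw [Nat.mul_div_cancel' hd.2]

lemma ramanujanSum_eq_sum (m i : ℕ) (hm : m ≠ 0) :
    ramanujanSum m i
      = ∑ e ∈ m.divisors, (μ e : ℤ) * (if (m / e) ∣ i then ((m / e : ℕ) : ℤ) else 0) := by
  unfold ramanujanSum
  rw [divisors_gcd_eq m i hm, Finset.sum_filter]
  rw [← Nat.sum_div_divisors m
    (fun e => (μ e : ℤ) * (if (m / e) ∣ i then ((m / e : ℕ) : ℤ) else 0))]
  refine Finset.sum_congr rfl fun d hd => ?_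
  have hd' : d ∣ m := (Nat.mem_divisors.mp hd).1
  rw [Nat.div_div_self hd' hm]
  by_cases h : d ∣ i <;> simp [h]

lemma sum_coprime_pow (m : ℕ) (hm : 0 < m) (ξ : ℂ) (hξ : IsPrimitiveRoot ξ m) (i : ℕ) :
    ∑ k ∈ (Finset.Icc 1 m).filter (fun k => Nat.gcd m k = 1), ξ ^ (i * k)
      = (ramanujanSum m i : ℂ) := by
  have step1 : ∑ k ∈ (Icc 1 m).filter (fun k => Nat.gcd m k = 1), ξ ^ (i * k)
      = ∑ k ∈ Icc 1 m, ∑ e ∈ (Nat.gcd m k).divisors, (μ e : ℂ) * ξ ^ (i * k) := by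
    rw [Finset.sum_filter]
    refine Finset.sum_congr rfl fun k hk => ?_
    rw [← Finset.sum_mul]
    have h2 : ∑ e ∈ (Nat.gcd m k).divisors, (μ e : ℂ)
        = if Nat.gcd m k = 1 then 1 else 0 := by
      have h3 := congrArg (fun z : ℤ => (z : ℂ)) (sum_moebius_divisors (Nat.gcd m k))
      push_cast at h3
      simpa using h3
    rw [h2]; split <;> simp
  rw [step1, swap_gcd m hm.ne' _ _]
  have step2 : ∀ e ∈ m.divisors,
      ∑ k ∈ (Icc 1 m).filter (fun k => e ∣ k), (μ e : ℂ) * ξ ^ (i * k)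
      = (μ e : ℂ) * (if (m / e) ∣ i then ((m / e : ℕ) : ℂ) else 0) := by
    intro e he
    obtain ⟨hedvd, -⟩ := Nat.mem_divisors.mp he
    have he0 : 0 < e := Nat.pos_of_ne_zero (fun h => hm.ne' (by simpa [h] using hedvd))
    rw [sum_Icc_filter_dvd m e hedvd hm.ne', ← Finset.mul_sum]
    congr 1
    have hprim : IsPrimitiveRoot (ξ ^ e) (m / e) :=
      hξ.pow hm (Nat.mul_div_cancel' hedvd).symm
    have hexp : ∀ l, ξ ^ (i * (e * l)) = (ξ ^ e) ^ (i * l) := fun l => by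
      rw [← pow_mul]; ring_nf
    simp only [hexp]
    exact sum_pow_primroot (m / e) (Nat.div_pos (Nat.le_of_dvd hm hedvd) he0) _ hprim i
  rw [Finset.sum_congr rfl step2, ramanujanSum_eq_sum m i hm.ne']
  rw [Int.cast_sum]
  refine Finset.sum_congr rfl fun e _ => ?_
  split_ifs <;> simp only [Int.cast_mul, Int.cast_natCast, Int.cast_zero, mul_zero]

lemma sum_gcd_fiber {β : Type*} [AddCommMonoid β] (n d : ℕ) (hn : n ≠ 0) (hd : d ∣ n)
    (hd0 : d ≠ 0) (G : ℕ → β) :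
    ∑ j ∈ (Finset.Icc 1 n).filter (fun j => Nat.gcd n j = d), G j
      = ∑ k ∈ (Finset.Icc 1 (n / d)).filter (fun k => Nat.gcd (n / d) k = 1), G (d * k) := by
  have hnd : n = d * (n / d) := (Nat.mul_div_cancel' hd).symm
  refine Finset.sum_nbij' (fun j => j / d) (fun k => d * k) ?_ ?_ ?_ ?_ ?_
  · intro j hj
    simp only [Finset.mem_filter, Finset.mem_Icc] at hj ⊢
    obtain ⟨⟨h1, h2⟩, h3⟩ := hj
    have hdj : d ∣ j := h3 ▸ Nat.gcd_dvd_right n j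
    obtain ⟨j', rfl⟩ := hdj
    rw [Nat.mul_div_cancel_left j' (Nat.pos_of_ne_zero hd0)]
    refine ⟨⟨Nat.pos_of_ne_zero (by rintro rfl; simp at h1), ?_⟩, ?_⟩
    · calc j' = (d * j') / d := (Nat.mul_div_cancel_left j' (Nat.pos_of_ne_zero hd0)).symm
      _ ≤ n / d := Nat.div_le_div_right h2
    · have h4 : d * Nat.gcd (n / d) j' = d * 1 := by
        rw [mul_one, ← Nat.gcd_mul_left d (n / d) j', ← hnd]
        exact h3
      exact Nat.eq_of_mul_eq_mul_left (Nat.pos_of_ne_zero hd0) h4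
  · intro k hk
    simp only [Finset.mem_filter, Finset.mem_Icc] at hk ⊢
    obtain ⟨⟨h1, h2⟩, h3⟩ := hk
    refine ⟨⟨Nat.mul_pos (Nat.pos_of_ne_zero hd0) h1, ?_⟩, ?_⟩
    · calc d * k ≤ d * (n / d) := Nat.mul_le_mul_left d h2
      _ = n := Nat.mul_div_cancel' hd
    · have h4 : Nat.gcd n (d * k) = d * Nat.gcd (n / d) k := by
        conv_lhs => rw [hnd]
        exact Nat.gcd_mul_left d (n / d) k
      rw [h4, h3, mul_one]
  · intro j hj
    simp only [Finset.mem_filter] at hj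
    have hdj : d ∣ j := hj.2 ▸ Nat.gcd_dvd_right n j
    exact Nat.mul_div_cancel' hdj
  · intro k _
    exact Nat.mul_div_cancel_left k (Nat.pos_of_ne_zero hd0)
  · intro j hj
    simp only [Finset.mem_filter] at hj
    have hdj : d ∣ j := hj.2 ▸ Nat.gcd_dvd_right n j
    rw [Nat.mul_div_cancel' hdj]

lemma part1 (n : ℕ) (hn : 0 < n) (ξ : ℂ) (hξ : IsPrimitiveRoot ξ n) (i : ℕ) :
    ∑ j ∈ Finset.Icc 1 n, (2 : ℂ) ^ (Nat.gcd n j - 1) * ξ ^ (i * j)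
      = ∑ d ∈ n.divisors, (2 : ℂ) ^ (d - 1) * (ramanujanSum (n / d) i : ℂ) := by
  have maps : ∀ j ∈ Finset.Icc 1 n, Nat.gcd n j ∈ n.divisors := fun j hj =>
    Nat.mem_divisors.mpr ⟨Nat.gcd_dvd_left _ _, hn.ne'⟩
  rw [← Finset.sum_fiberwise_of_maps_to maps]
  refine Finset.sum_congr rfl fun d hd => ?_
  obtain ⟨hdvd, -⟩ := Nat.mem_divisors.mp hd
  have hd0 : d ≠ 0 := fun h => hn.ne' (by simpa [h] using hdvd)
  have hstep : ∑ j ∈ (Finset.Icc 1 n).filter (fun j => Nat.gcd n j = d),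
      (2 : ℂ) ^ (Nat.gcd n j - 1) * ξ ^ (i * j)
      = ∑ j ∈ (Finset.Icc 1 n).filter (fun j => Nat.gcd n j = d),
      (2 : ℂ) ^ (d - 1) * ξ ^ (i * j) :=
    Finset.sum_congr rfl fun j hj => by rw [(Finset.mem_filter.mp hj).2]
  rw [hstep, sum_gcd_fiber n d hn.ne' hdvd hd0, ← Finset.mul_sum]
  congr 1
  have hprim : IsPrimitiveRoot (ξ ^ d) (n / d) := hξ.pow hn (Nat.mul_div_cancel' hdvd).symm
  have hexp : ∀ k, ξ ^ (i * (d * k)) = (ξ ^ d) ^ (i * k) := fun k => by rw [← pow_mul]; ring_nf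
  simp only [hexp]
  exact sum_coprime_pow (n / d) (Nat.div_pos (Nat.le_of_dvd hn hdvd) (Nat.pos_of_ne_zero hd0))
    _ hprim i

/-- `F e = ∑_{f ∣ e} μ(e/f) 2^f`, the number of aperiodic binary necklaces-ish. -/
def gaussF (e : ℕ) : ℤ := ∑ f ∈ e.divisors, (μ (e / f) : ℤ) * 2 ^ f

lemma gaussF_alt (e : ℕ) (he : e ≠ 0) :
    gaussF e = ∑ f ∈ e.divisors, (μ f : ℤ) * 2 ^ (e / f) := by
  unfold gaussF
  rw [← Nat.sum_div_divisors e (fun f => (μ f : ℤ) * 2 ^ (e / f))]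
  refine Finset.sum_congr rfl fun f hf => ?_
  rw [Nat.div_div_self (Nat.mem_divisors.mp hf).1 he]

lemma sum_gaussF (d : ℕ) (hd : d ≠ 0) : ∑ e ∈ d.divisors, gaussF e = 2 ^ d := by
  unfold gaussF
  rw [swap_divisors d hd]
  have step : ∀ f ∈ d.divisors,
      ∑ e ∈ d.divisors.filter (fun e => f ∣ e), (μ (e / f) : ℤ) * 2 ^ f
      = (if d / f = 1 then 1 else 0) * 2 ^ f := by
    intro f hf
    obtain ⟨hfd, -⟩ := Nat.mem_divisors.mp hf
    have hf0 : f ≠ 0 := fun h => hd (by simpa [h] using hfd)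
    rw [sum_divisors_filter_dvd d f hd hfd, ← Finset.sum_mul]
    congr 1
    have : ∀ c ∈ (d / f).divisors, (μ (f * c / f) : ℤ) = (μ c : ℤ) := fun c _ => by
      rw [Nat.mul_div_cancel_left c (Nat.pos_of_ne_zero hf0)]
    rw [Finset.sum_congr rfl this, sum_moebius_divisors]
  rw [Finset.sum_congr rfl step]
  rw [Finset.sum_eq_single_of_mem d (Nat.mem_divisors_self d hd)]
  · rw [Nat.div_self (Nat.pos_of_ne_zero hd), if_pos rfl, one_mul]
  · intro f hf hne
    obtain ⟨hfd, -⟩ := Nat.mem_divisors.mp hf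
    have : d / f ≠ 1 := by
      intro h
      apply hne
      have := Nat.eq_mul_of_div_eq_right hfd h
      omega
    rw [if_neg this, zero_mul]

lemma euler_lift (p k t : ℕ) (hp : p.Prime) (hp2 : p ≠ 2) (hk : 1 ≤ k)
    (ht : p ^ (k - 1) ∣ t) : (p ^ k : ℤ) ∣ 2 ^ (p * t) - 2 ^ t := by
  have hco : Nat.Coprime 2 (p ^ k) :=
    ((Nat.coprime_primes Nat.prime_two hp).mpr (fun h => hp2 h.symm)).pow_right k
  have heuler : 2 ^ Nat.totient (p ^ k) ≡ 1 [MOD p ^ k] := Nat.ModEq.pow_totient hco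
  have htot : Nat.totient (p ^ k) = p ^ (k - 1) * (p - 1) :=
    Nat.totient_prime_pow hp (Nat.pos_of_ne_zero (by omega))
  obtain ⟨s, hs⟩ := ht
  have hdvd : Nat.totient (p ^ k) ∣ (p - 1) * t := by
    rw [htot, hs]; ring_nf; exact Dvd.intro s (by ring)
  obtain ⟨u, hu⟩ := hdvd
  have h1 : 2 ^ ((p - 1) * t) ≡ 1 [MOD p ^ k] := by
    rw [hu, pow_mul]
    calc (2 ^ Nat.totient (p ^ k)) ^ u ≡ 1 ^ u [MOD p ^ k] := heuler.pow u
    _ = 1 := one_pow u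
  have h2 : (p ^ k : ℤ) ∣ (2 : ℤ) ^ ((p - 1) * t) - 1 := by
    have h3 := h1.dvd
    push_cast at h3
    have h4 := dvd_neg.mpr h3
    rwa [neg_sub] at h4
  have hpt : p * t = t + (p - 1) * t := by
    have h4 := hp.two_le
    cases' Nat.exists_eq_add_of_le (Nat.one_le_of_lt h4) with q hq
    subst hq
    simp [Nat.add_sub_cancel_left]
    ring
  calc (p ^ k : ℤ) ∣ (2 ^ t) * ((2 : ℤ) ^ ((p - 1) * t) - 1) := h2.mul_left _
  _ = 2 ^ (p * t) - 2 ^ t := by rw [mul_sub, mul_one, ← pow_add, ← hpt]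

lemma filter_not_dvd_divisors (p j m : ℕ) (hp : p.Prime) (hpm : ¬ p ∣ m) (hm : m ≠ 0) :
    (p ^ j * m).divisors.filter (fun d => ¬ p ∣ d) = m.divisors := by
  have hN : p ^ j * m ≠ 0 := mul_ne_zero (pow_ne_zero j hp.pos.ne') hm
  ext d
  simp only [Finset.mem_filter, Nat.mem_divisors]
  constructor
  · rintro ⟨⟨h1, -⟩, h2⟩
    have hco : Nat.Coprime d (p ^ j) :=
      (((Nat.Prime.coprime_iff_not_dvd hp).mpr h2).symm).pow_right j
    refine ⟨?_, hm⟩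
    rw [mul_comm] at h1
    exact Nat.Coprime.dvd_of_dvd_mul_right hco h1
  · rintro ⟨h1, -⟩
    exact ⟨⟨h1.mul_left _, hN⟩, fun hpd => hpm (hpd.trans h1)⟩

lemma prime_pow_dvd_gaussF (p e : ℕ) (hp : p.Prime) (hp2 : p ≠ 2) (he : e ≠ 0) (hpe : p ∣ e) :
    ((p ^ (e.factorization p) : ℕ) : ℤ) ∣ gaussF e := by
  set k := e.factorization p with hk
  have hk1 : 1 ≤ k := hp.factorization_pos_of_dvd he hpe
  set m := e / p ^ k with hm
  have hem : e = p ^ k * m := (Nat.ordProj_mul_ordCompl_eq_self e p).symm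
  have hpm : ¬ p ∣ m := Nat.not_dvd_ordCompl hp he
  have hm0 : m ≠ 0 := by
    intro h; rw [h, mul_zero] at hem; exact he hem
  have hp0 : 0 < p := hp.pos
  have hep : e / p = p ^ (k - 1) * m := by
    have : e = p * (p ^ (k - 1) * m) := by
      rw [hem, ← mul_assoc, ← pow_succ']
      congr 2
      omega
    rw [this, Nat.mul_div_cancel_left _ hp0]
  have hepdvd : p ∣ e := hpe
  rw [gaussF_alt e he, ← Finset.sum_filter_add_sum_filter_not e.divisors (fun d => p ∣ d)]
  have hsplit2 : e.divisors.filter (fun d => ¬ p ∣ d) = m.divisors := by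
    conv_lhs => rw [hem]
    exact filter_not_dvd_divisors p k m hp hpm hm0
  have hsplit1 : ∑ d ∈ e.divisors.filter (fun d => p ∣ d), (μ d : ℤ) * 2 ^ (e / d)
      = ∑ c ∈ (e / p).divisors, (μ (p * c) : ℤ) * 2 ^ (e / (p * c)) :=
    sum_divisors_filter_dvd e p he hpe _
  rw [hsplit1, hsplit2]
  -- split the (e/p) sum by p ∣ c
  rw [← Finset.sum_filter_add_sum_filter_not (e / p).divisors (fun c => p ∣ c)]
  have hzero : ∑ c ∈ (e / p).divisors.filter (fun c => p ∣ c),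
      (μ (p * c) : ℤ) * 2 ^ (e / (p * c)) = 0 := by
    refine Finset.sum_eq_zero fun c hc => ?_
    obtain ⟨-, hpc⟩ := Finset.mem_filter.mp hc
    have : ¬ Squarefree (p * c) := by
      intro hsq
      obtain ⟨c', rfl⟩ := hpc
      have := hsq p (by ring_nf; exact Dvd.intro c' (by ring))
      exact hp.one_lt.ne' (Nat.isUnit_iff.mp this)
    rw [moebius_eq_zero_of_not_squarefree this]
    simp
  rw [hzero, zero_add]
  have hsplit3 : (e / p).divisors.filter (fun c => ¬ p ∣ c) = m.divisors := by
    conv_lhs => rw [hep]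
    exact filter_not_dvd_divisors p (k - 1) m hp hpm hm0
  rw [hsplit3, ← Finset.sum_add_distrib]
  refine Finset.dvd_sum fun c hc => ?_
  obtain ⟨hcm, -⟩ := Nat.mem_divisors.mp hc
  have hpc : ¬ p ∣ c := fun h => hpm (h.trans hcm)
  have hmu : (μ (p * c) : ℤ) = -(μ c) := by
    rw [isMultiplicative_moebius.map_mul_of_coprime
      ((Nat.Prime.coprime_iff_not_dvd hp).mpr hpc), moebius_apply_prime hp]
    ring
  obtain ⟨c', hcc⟩ := hcm
  have hc0 : 0 < c := Nat.pos_of_ne_zero (fun h => hm0 (by simp [h, hcc]))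
  have hpk : p ^ k = p * p ^ (k - 1) := by
    rw [← pow_succ']
    congr 1
    omega
  have hec : e / c = p * (p ^ (k - 1) * c') := by
    have h5 : e = c * (p * (p ^ (k - 1) * c')) := by rw [hem, hcc, hpk]; ring
    rw [h5, Nat.mul_div_cancel_left _ hc0]
  have hepc : e / (p * c) = p ^ (k - 1) * c' := by
    have h5 : e = (p * c) * (p ^ (k - 1) * c') := by rw [hem, hcc, hpk]; ring
    rw [h5, Nat.mul_div_cancel_left _ (Nat.mul_pos hp0 hc0)]
  rw [hmu, hec, hepc]
  have hEL := euler_lift p k (p ^ (k - 1) * c') hp hp2 hk1 (Dvd.intro _ rfl)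
  push_cast at hEL ⊢
  obtain ⟨w, hw⟩ := hEL
  exact ⟨(μ c : ℤ) * w, by linear_combination (μ c : ℤ) * hw⟩

lemma odd_dvd_gaussF (e : ℕ) (he : e ≠ 0) (hodd : Odd e) : (e : ℤ) ∣ gaussF e := by
  have hprod : ∏ p ∈ e.primeFactors, p ^ e.factorization p = e := by
    have h := Nat.factorization_prod_pow_eq_self he
    rwa [Finsupp.prod, Nat.support_factorization] at h
  have hcast : (e : ℤ) = ∏ p ∈ e.primeFactors, ((p ^ e.factorization p : ℕ) : ℤ) := by
    rw [← Nat.cast_prod, hprod]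
  rw [hcast]
  refine Finset.prod_dvd_of_coprime ?_ ?_
  · intro p hp q hq hne
    simp only [Function.onFun]
    rw [Nat.isCoprime_iff_coprime]
    exact Nat.Coprime.pow _ _
      ((Nat.coprime_primes (Nat.prime_of_mem_primeFactors hp)
        (Nat.prime_of_mem_primeFactors hq)).mpr hne)
  · intro p hp
    have hpp := Nat.prime_of_mem_primeFactors hp
    have hpe := Nat.dvd_of_mem_primeFactors hp
    have hp2 : p ≠ 2 := by
      rintro rfl
      rw [Nat.odd_iff] at hodd
      obtain ⟨w, hw⟩ := hpe
      omega
    exact prime_pow_dvd_gaussF p e hpp hp2 he hpe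

lemma sum_ramanujan_divisors (M i : ℕ) (hM : M ≠ 0) :
    ∑ m ∈ M.divisors, ramanujanSum m i = if M ∣ i then (M : ℤ) else 0 := by
  have step0 : ∀ m ∈ M.divisors, ramanujanSum m i
      = ∑ d ∈ m.divisors, (if d ∣ i then (μ (m / d) : ℤ) * d else 0) := by
    intro m hm
    have hm0 : m ≠ 0 := Nat.pos_of_mem_divisors hm |>.ne'
    unfold ramanujanSum
    rw [divisors_gcd_eq m i hm0, Finset.sum_filter]
  rw [Finset.sum_congr rfl step0,
    swap_divisors M hM (fun d m => if d ∣ i then (μ (m / d) : ℤ) * d else 0)]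
  have step1 : ∀ d ∈ M.divisors,
      ∑ m ∈ M.divisors.filter (fun m => d ∣ m), (if d ∣ i then (μ (m / d) : ℤ) * d else 0)
      = if d ∣ i then (if M / d = 1 then (1:ℤ) else 0) * (d:ℤ) else 0 := by
    intro d hd
    obtain ⟨hdM, -⟩ := Nat.mem_divisors.mp hd
    have hd0 : 0 < d := Nat.pos_of_mem_divisors hd
    rw [sum_divisors_filter_dvd M d hM hdM]
    by_cases h : d ∣ i
    · simp only [if_pos h]
      rw [← Finset.sum_mul]
      congr 1
      have : ∀ c ∈ (M / d).divisors, (μ (d * c / d) : ℤ) = (μ c : ℤ) := fun c _ => by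
        rw [Nat.mul_div_cancel_left c hd0]
      rw [Finset.sum_congr rfl this, sum_moebius_divisors]
    · simp only [if_neg h, Finset.sum_const_zero]
  rw [Finset.sum_congr rfl step1]
  rw [Finset.sum_eq_single_of_mem M (Nat.mem_divisors_self M hM)]
  · rw [Nat.div_self (Nat.pos_of_ne_zero hM), if_pos rfl, one_mul]
  · intro d hd hne
    obtain ⟨hdM, -⟩ := Nat.mem_divisors.mp hd
    have : M / d ≠ 1 := by
      intro h
      apply hne
      have := Nat.eq_mul_of_div_eq_right hdM h
      omega
    rw [if_neg this, zero_mul, ite_self]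

lemma n_dvd_two_S (n i : ℕ) (hn : 0 < n) (hodd : Odd n) :
    (n : ℤ) ∣ ∑ d ∈ n.divisors, 2 ^ d * ramanujanSum (n / d) i := by
  have step0 : ∀ d ∈ n.divisors, (2 : ℤ) ^ d * ramanujanSum (n / d) i
      = ∑ e ∈ d.divisors, gaussF e * ramanujanSum (n / d) i := by
    intro d hd
    rw [← Finset.sum_mul, sum_gaussF d (Nat.pos_of_mem_divisors hd).ne']
  rw [Finset.sum_congr rfl step0,
    swap_divisors n hn.ne' (fun e d => gaussF e * ramanujanSum (n / d) i)]
  refine Finset.dvd_sum fun e he => ?_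
  obtain ⟨heN, -⟩ := Nat.mem_divisors.mp he
  have he0 : e ≠ 0 := fun h => hn.ne' (by simpa [h] using heN)
  have heodd : Odd e := by
    rcases Nat.even_or_odd e with h | h
    · exfalso
      rw [Nat.odd_iff] at hodd
      obtain ⟨w, hw⟩ := (h.two_dvd).trans heN
      omega
    · exact h
  rw [sum_divisors_filter_dvd n e hn.ne' heN, ← Finset.mul_sum]
  have hinner : ∑ c ∈ (n / e).divisors, ramanujanSum (n / (e * c)) i
      = if (n / e) ∣ i then ((n / e : ℕ) : ℤ) else 0 := by
    have h1 : ∀ c ∈ (n / e).divisors,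
        ramanujanSum (n / (e * c)) i = ramanujanSum ((n / e) / c) i := by
      intro c _; rw [Nat.div_div_eq_div_mul]
    have hne0 : (n / e) ≠ 0 :=
      (Nat.div_pos (Nat.le_of_dvd hn heN) (Nat.pos_of_ne_zero he0)).ne'
    rw [Finset.sum_congr rfl h1,
      Nat.sum_div_divisors (n / e) (fun m => ramanujanSum m i),
      sum_ramanujan_divisors (n / e) i hne0]
  rw [hinner]
  split
  · have hdvd1 : (e : ℤ) * ((n / e : ℕ) : ℤ) ∣ gaussF e * ((n / e : ℕ) : ℤ) :=
      mul_dvd_mul (odd_dvd_gaussF e he0 heodd) dvd_rfl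
    have heq : (e : ℤ) * ((n / e : ℕ) : ℤ) = (n : ℤ) := by
      rw [← Nat.cast_mul, Nat.mul_div_cancel' heN]
    rwa [heq] at hdvd1
  · rw [mul_zero]
    exact dvd_zero _

end AuxLemmas

/-- For `n` odd and `ζ` a primitive `n`-th root of unity, the sum
`∑_{j=1}^{n} 2^{gcd(n,j)-1} ζ^{-ij}` equals `∑_{d ∣ n} 2^{d-1} c_{n/d}(i)`, and
`n·c_n(i) - ∑_{j=1}^{n} 2^{gcd(n,j)-1} ζ^{-ij}` is divisible by `2n`. -/
theorem sum_two_pow_gcd_zeta (n : ℕ) (hn : 0 < n) (hodd : Odd n) (ζ : ℂ)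
    (hζ : IsPrimitiveRoot ζ n) (i : ℕ) :
    (∑ j ∈ Finset.Icc 1 n, (2 : ℂ) ^ (Nat.gcd n j - 1) * (ζ⁻¹) ^ (i * j) =
      ∑ d ∈ n.divisors, (2 : ℂ) ^ (d - 1) * (ramanujanSum (n / d) i : ℂ)) ∧
    (∃ z : ℤ, (n : ℂ) * (ramanujanSum n i : ℂ) -
        ∑ j ∈ Finset.Icc 1 n, (2 : ℂ) ^ (Nat.gcd n j - 1) * (ζ⁻¹) ^ (i * j) =
      (2 * n : ℂ) * (z : ℂ)) := by
  have hξ : IsPrimitiveRoot (ζ⁻¹) n := hζ.inv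
  have h1 := part1 n hn ζ⁻¹ hξ i
  refine ⟨h1, ?_⟩
  set S : ℤ := ∑ d ∈ n.divisors, 2 ^ (d - 1) * ramanujanSum (n / d) i with hS
  have hcast : ∑ d ∈ n.divisors, (2 : ℂ) ^ (d - 1) * (ramanujanSum (n / d) i : ℂ)
      = (S : ℂ) := by
    rw [hS, Int.cast_sum]
    refine Finset.sum_congr rfl fun d _ => ?_
    push_cast
    ring
  have h2S : 2 * S = ∑ d ∈ n.divisors, 2 ^ d * ramanujanSum (n / d) i := by
    rw [hS, Finset.mul_sum]
    refine Finset.sum_congr rfl fun d hd => ?_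
    have hd1 : 1 ≤ d := Nat.pos_of_mem_divisors hd
    rw [← mul_assoc]
    congr 1
    rw [← pow_succ']
    congr 1
    omega
  have hndvd : (n : ℤ) ∣ 2 * S := by rw [h2S]; exact n_dvd_two_S n i hn hodd
  have hconat : Nat.Coprime n 2 := Nat.coprime_two_right.mpr hodd
  have hco : IsCoprime (n : ℤ) (2 : ℤ) := by
    have h := Nat.isCoprime_iff_coprime.mpr hconat
    exact_mod_cast h
  have hnS : (n : ℤ) ∣ S := hco.dvd_of_dvd_mul_left hndvd
  have h1mem : (1 : ℕ) ∈ n.divisors := Nat.one_mem_divisors.mpr hn.ne'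
  have hSsplit : ∑ d ∈ n.divisors.erase 1, 2 ^ (d - 1) * ramanujanSum (n / d) i
      + 2 ^ (1 - 1) * ramanujanSum (n / 1) i = S := Finset.sum_erase_add _ _ h1mem
  have hpar : (2 : ℤ) ∣ S - ramanujanSum n i := by
    rw [← hSsplit]
    have h5 : (2 : ℤ) ^ (1 - 1) * ramanujanSum (n / 1) i = ramanujanSum n i := by norm_num
    rw [h5, add_sub_cancel_right]
    refine Finset.dvd_sum fun d hd => ?_
    have hd2 : d ≠ 1 := (Finset.mem_erase.mp hd).1
    have hd1 : 1 ≤ d := Nat.pos_of_mem_divisors (Finset.mem_erase.mp hd).2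
    have h3 : (2 : ℤ) ∣ 2 ^ (d - 1) := dvd_pow_self 2 (by omega)
    exact h3.mul_right _
  have h2dvd : (2 : ℤ) ∣ (n : ℤ) * ramanujanSum n i - S := by
    have hn1 : (2 : ℤ) ∣ (n : ℤ) - 1 := by
      obtain ⟨w, hw⟩ := hodd
      subst hw
      exact ⟨w, by push_cast; ring⟩
    have h4 : (n : ℤ) * ramanujanSum n i - S
        = ((n : ℤ) - 1) * ramanujanSum n i - (S - ramanujanSum n i) := by ring
    rw [h4]
    exact (hn1.mul_right _).sub hpar
  have hndvd2 : (n : ℤ) ∣ (n : ℤ) * ramanujanSum n i - S :=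
    (dvd_mul_right _ _).sub hnS
  have h2n : (2 * (n : ℤ)) ∣ (n : ℤ) * ramanujanSum n i - S :=
    IsCoprime.mul_dvd hco.symm h2dvd hndvd2
  obtain ⟨z, hz⟩ := h2n
  refine ⟨z, ?_⟩
  rw [h1, hcast]
  have hzc := congrArg (fun x : ℤ => (x : ℂ)) hz
  push_cast at hzc ⊢
  linear_combination hzc
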